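/- Fix an integer m ≥ 1 and set x(t) = cos(2t). For integers j ∈ {1, 2, 3} and k, let t₁(k, j) = ((2m+1)j − 2k)π/(2(2m+1)) be the first time of the Type II double point C^{II}_{k,j}. Then: (a) x(t₁(k,1)) = x(t₁(k,3)) for all 1 ≤ k ≤ m; (b) x(t₁(k,2)) = x(t₁(2m+1−k, 2)) for all 1 ≤ k ≤ 2m; (c) the total number of Type II double points C^{II}_{k,j} (over the allowed ranges of (k,j)) with x(t₁(k,j)) > 0 is 2m; and (d) of these, exactly 2⌊m/2⌋ have j = 2 and exactly 2⌈m/2⌉ have j ∈ {1, 3}. -/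

import Mathlib

open Real

/-- The first time of the Type II double point `C^{II}_{k,j}` of the projection
`t ↦ (cos 2t, cos((2m+1)t + 1/2))`. -/
noncomputable def tII₁ (m k j : ℤ) : ℝ :=
  ((2 * (m : ℝ) + 1) * (j : ℝ) - 2 * (k : ℝ)) * π / (2 * (2 * (m : ℝ) + 1))

/-- The index pairs `(k, j)` of the Type II double points `C^{II}_{k,j}`:
`j ∈ {1, 3}` with `1 ≤ k ≤ m`, or `j = 2` with `1 ≤ k ≤ 2m`. -/
def typeIIIndices (m : ℤ) : Set (ℤ × ℤ) :=
  {p | ((p.2 = 1 ∨ p.2 = 3) ∧ 1 ≤ p.1 ∧ p.1 ≤ m) ∨ (p.2 = 2 ∧ 1 ≤ p.1 ∧ p.1 ≤ 2 * m)}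

private lemma denom_pos (m : ℤ) (hm : 1 ≤ m) : (0:ℝ) < 2 * (m:ℝ) + 1 := by
  have : (1:ℝ) ≤ (m:ℝ) := by exact_mod_cast hm
  linarith

private lemma two_tII₁_eq (m k j : ℤ) (hm : 1 ≤ m) :
    2 * tII₁ m k j = (j:ℝ) * π - 2 * (k:ℝ) * π / (2 * (m:ℝ) + 1) := by
  have hc := (denom_pos m hm).ne'
  unfold tII₁
  field_simp

private lemma cos_pos_low (m k : ℤ) (hm : 1 ≤ m) (hk1 : 1 ≤ k) (hk2 : 2 * k ≤ m) :
    0 < Real.cos (2 * (k:ℝ) * π / (2 * (m:ℝ) + 1)) := by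
  have hc := denom_pos m hm
  have hπ := Real.pi_pos
  apply Real.cos_pos_of_mem_Ioo
  have hk1' : (1:ℝ) ≤ (k:ℝ) := by exact_mod_cast hk1
  have hk2' : (4:ℝ) * (k:ℝ) ≤ 2 * (m:ℝ) := by exact_mod_cast (by omega : 4 * k ≤ 2 * m)
  constructor
  · have : (0:ℝ) < 2 * (k:ℝ) * π / (2 * (m:ℝ) + 1) := by
      apply div_pos _ hc; nlinarith
    linarith
  · rw [div_lt_iff₀ hc]
    nlinarith

private lemma cos_neg_mid (m k : ℤ) (hm : 1 ≤ m) (h1 : m < 2 * k) (h2 : 2 * k ≤ 3 * m + 1) :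
    Real.cos (2 * (k:ℝ) * π / (2 * (m:ℝ) + 1)) < 0 := by
  have hc := denom_pos m hm
  have hπ := Real.pi_pos
  apply Real.cos_neg_of_pi_div_two_lt_of_lt
  · rw [lt_div_iff₀ hc]
    have : (2:ℝ) * (m:ℝ) + 2 ≤ 4 * (k:ℝ) := by exact_mod_cast (by omega : 2 * m + 2 ≤ 4 * k)
    nlinarith
  · rw [div_lt_iff₀ hc]
    have : (4:ℝ) * (k:ℝ) ≤ 6 * (m:ℝ) + 2 := by exact_mod_cast (by omega : 4 * k ≤ 6 * m + 2)
    nlinarith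

private lemma cos_pos_high (m k : ℤ) (hm : 1 ≤ m) (h1 : 3 * m + 1 < 2 * k) (h2 : k ≤ 2 * m) :
    0 < Real.cos (2 * (k:ℝ) * π / (2 * (m:ℝ) + 1)) := by
  have hc := denom_pos m hm
  have hπ := Real.pi_pos
  rw [← Real.cos_sub_two_pi]
  apply Real.cos_pos_of_mem_Ioo
  have hθlt : 2 * (k:ℝ) * π / (2 * (m:ℝ) + 1) < 2 * π := by
    rw [div_lt_iff₀ hc]
    have : (k:ℝ) ≤ 2 * (m:ℝ) := by exact_mod_cast h2
    nlinarith
  have hθgt : 3 * π / 2 < 2 * (k:ℝ) * π / (2 * (m:ℝ) + 1) := by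
    rw [lt_div_iff₀ hc]
    have : (6:ℝ) * (m:ℝ) + 4 ≤ 4 * (k:ℝ) := by exact_mod_cast (by omega : 6 * m + 4 ≤ 4 * k)
    nlinarith
  constructor
  · linarith
  · linarith

private lemma cos_eval (m k : ℤ) (hm : 1 ≤ m) :
    Real.cos (2 * tII₁ m k 1) = -Real.cos (2 * (k:ℝ) * π / (2 * (m:ℝ) + 1)) ∧
    Real.cos (2 * tII₁ m k 2) = Real.cos (2 * (k:ℝ) * π / (2 * (m:ℝ) + 1)) ∧
    Real.cos (2 * tII₁ m k 3) = -Real.cos (2 * (k:ℝ) * π / (2 * (m:ℝ) + 1)) := by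
  set θ : ℝ := 2 * (k:ℝ) * π / (2 * (m:ℝ) + 1) with hθ
  refine ⟨?_, ?_, ?_⟩
  · rw [two_tII₁_eq m k 1 hm, show ((1:ℤ):ℝ) * π - θ = π - θ by push_cast; ring,
      Real.cos_pi_sub]
  · rw [two_tII₁_eq m k 2 hm, show ((2:ℤ):ℝ) * π - θ = -(θ - 2 * π) by push_cast; ring,
      Real.cos_neg, Real.cos_sub_two_pi]
  · rw [two_tII₁_eq m k 3 hm, show ((3:ℤ):ℝ) * π - θ = (π - θ) + 2 * π by push_cast; ring,
      Real.cos_add_two_pi, Real.cos_pi_sub]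

/-- The `x`-coordinates of the Type II double points of the projection
`t ↦ (cos 2t, cos((2m+1)t + 1/2))` satisfy `x(C^{II}_{k,1}) = x(C^{II}_{k,3})` and
`x(C^{II}_{k,2}) = x(C^{II}_{2m+1−k,2})`; exactly `2m` Type II double points have
positive `x`-coordinate, of which `2⌊m/2⌋` have `j = 2` and `2⌈m/2⌉` have `j ∈ {1,3}`. -/
theorem typeII_double_points_x_values (m : ℤ) (hm : 1 ≤ m) :
    (∀ k : ℤ, 1 ≤ k → k ≤ m →
      Real.cos (2 * tII₁ m k 1) = Real.cos (2 * tII₁ m k 3)) ∧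
    (∀ k : ℤ, 1 ≤ k → k ≤ 2 * m →
      Real.cos (2 * tII₁ m k 2) = Real.cos (2 * tII₁ m (2 * m + 1 - k) 2)) ∧
    ({p ∈ typeIIIndices m | 0 < Real.cos (2 * tII₁ m p.1 p.2)}.Finite ∧
      ({p ∈ typeIIIndices m | 0 < Real.cos (2 * tII₁ m p.1 p.2)}.ncard : ℤ) = 2 * m) ∧
    (({p ∈ typeIIIndices m | 0 < Real.cos (2 * tII₁ m p.1 p.2) ∧ p.2 = 2}.ncard : ℤ) =
        2 * ⌊(m : ℚ) / 2⌋ ∧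
      ({p ∈ typeIIIndices m |
          0 < Real.cos (2 * tII₁ m p.1 p.2) ∧ (p.2 = 1 ∨ p.2 = 3)}.ncard : ℤ) =
        2 * ⌈(m : ℚ) / 2⌉) := by
  have hc := denom_pos m hm
  have hcne := hc.ne'
  obtain ⟨q, hq1, hq2⟩ : ∃ q : ℤ, 2 * q ≤ m ∧ m ≤ 2 * q + 1 := ⟨m / 2, by omega, by omega⟩
  -- part (a)
  have parta : ∀ k : ℤ, 1 ≤ k → k ≤ m →
      Real.cos (2 * tII₁ m k 1) = Real.cos (2 * tII₁ m k 3) := by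
    intro k _ _
    rw [(cos_eval m k hm).1, (cos_eval m k hm).2.2]
  -- part (b)
  have partb : ∀ k : ℤ, 1 ≤ k → k ≤ 2 * m →
      Real.cos (2 * tII₁ m k 2) = Real.cos (2 * tII₁ m (2 * m + 1 - k) 2) := by
    intro k _ _
    rw [(cos_eval m k hm).2.1, (cos_eval m (2 * m + 1 - k) hm).2.1]
    have heq : 2 * ((2 * m + 1 - k : ℤ) : ℝ) * π / (2 * (m:ℝ) + 1)
        = -(2 * (k:ℝ) * π / (2 * (m:ℝ) + 1) - 2 * π) := by
      field_simp
      push_cast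
      ring
    rw [heq, Real.cos_neg, Real.cos_sub_two_pi]
  -- the finsets
  set F2 : Finset (ℤ × ℤ) :=
    (Finset.Icc 1 q ∪ Finset.Icc (2 * m + 1 - q) (2 * m)).image (fun k => (k, 2)) with hF2
  set F13 : Finset (ℤ × ℤ) :=
    ((Finset.Icc (q + 1) m).image (fun k => (k, 1))) ∪
      ((Finset.Icc (q + 1) m).image (fun k => (k, 3))) with hF13
  -- membership characterizations
  have mem2 : ∀ p : ℤ × ℤ,
      (p ∈ typeIIIndices m ∧ 0 < Real.cos (2 * tII₁ m p.1 p.2) ∧ p.2 = 2) ↔ p ∈ F2 := by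
    intro p
    simp only [hF2, Finset.mem_image, Finset.mem_union, Finset.mem_Icc, typeIIIndices,
      Set.mem_setOf_eq]
    constructor
    · rintro ⟨hmem, hpos, hj⟩
      obtain ⟨h13, hk1, hk2⟩ | ⟨_, hk1, hk2⟩ := hmem
      · omega
      rw [hj, (cos_eval m p.1 hm).2.1] at hpos
      rcases (by omega : 2 * p.1 ≤ m ∨ (m < 2 * p.1 ∧ 2 * p.1 ≤ 3 * m + 1) ∨
          3 * m + 1 < 2 * p.1) with h | h | h
      · exact ⟨p.1, Or.inl ⟨hk1, by omega⟩, by rw [← hj]⟩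
      · exact absurd hpos (not_lt.mpr (cos_neg_mid m p.1 hm h.1 h.2).le)
      · exact ⟨p.1, Or.inr ⟨by omega, hk2⟩, by rw [← hj]⟩
    · rintro ⟨a, ha, rfl⟩
      have hb : 1 ≤ a ∧ a ≤ 2 * m := by omega
      refine ⟨Or.inr ⟨rfl, hb.1, hb.2⟩, ?_, rfl⟩
      rw [(cos_eval m a hm).2.1]
      rcases ha with ⟨h1, h2⟩ | ⟨h1, h2⟩
      · exact cos_pos_low m a hm h1 (by omega)
      · exact cos_pos_high m a hm (by omega) h2
  have mem13 : ∀ p : ℤ × ℤ,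
      (p ∈ typeIIIndices m ∧ 0 < Real.cos (2 * tII₁ m p.1 p.2) ∧ (p.2 = 1 ∨ p.2 = 3)) ↔
        p ∈ F13 := by
    intro p
    simp only [hF13, Finset.mem_union, Finset.mem_image, Finset.mem_Icc, typeIIIndices,
      Set.mem_setOf_eq]
    constructor
    · rintro ⟨hmem, hpos, hj⟩
      obtain ⟨h13, hk1, hk2⟩ | ⟨h2, hk1, hk2⟩ := hmem
      · have hneg : Real.cos (2 * (p.1 : ℝ) * π / (2 * (m:ℝ) + 1)) < 0 := by
          rcases hj with hj | hj
          · rw [hj, (cos_eval m p.1 hm).1] at hpos; linarith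
          · rw [hj, (cos_eval m p.1 hm).2.2] at hpos; linarith
        have hrange : q + 1 ≤ p.1 := by
          by_contra hcon
          exact absurd (cos_pos_low m p.1 hm hk1 (by omega)) (not_lt.mpr hneg.le)
        rcases hj with hj | hj
        · exact Or.inl ⟨p.1, ⟨hrange, hk2⟩, by rw [← hj]⟩
        · exact Or.inr ⟨p.1, ⟨hrange, hk2⟩, by rw [← hj]⟩
      · omega
    · have key : ∀ a : ℤ, q + 1 ≤ a → a ≤ m →
          0 < -Real.cos (2 * (a:ℝ) * π / (2 * (m:ℝ) + 1)) := by
        intro a h1 h2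
        have := cos_neg_mid m a hm (by omega) (by omega)
        linarith
      rintro (⟨a, ⟨h1, h2⟩, rfl⟩ | ⟨a, ⟨h1, h2⟩, rfl⟩)
      · refine ⟨Or.inl ⟨Or.inl rfl, by omega, h2⟩, ?_, Or.inl rfl⟩
        rw [(cos_eval m a hm).1]; exact key a h1 h2
      · refine ⟨Or.inl ⟨Or.inr rfl, by omega, h2⟩, ?_, Or.inr rfl⟩
        rw [(cos_eval m a hm).2.2]; exact key a h1 h2
  have memall : ∀ p : ℤ × ℤ,
      (p ∈ typeIIIndices m ∧ 0 < Real.cos (2 * tII₁ m p.1 p.2)) ↔ p ∈ F2 ∪ F13 := by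
    intro p
    rw [Finset.mem_union, ← mem2 p, ← mem13 p]
    constructor
    · rintro ⟨hmem, hpos⟩
      have hj : p.2 = 1 ∨ p.2 = 3 ∨ p.2 = 2 := by
        rcases hmem with ⟨h, _⟩ | ⟨h, _⟩ <;> tauto
      rcases hj with h | h | h
      · exact Or.inr ⟨hmem, hpos, Or.inl h⟩
      · exact Or.inr ⟨hmem, hpos, Or.inr h⟩
      · exact Or.inl ⟨hmem, hpos, h⟩
    · rintro (⟨h1, h2, _⟩ | ⟨h1, h2, _⟩) <;> exact ⟨h1, h2⟩
  -- set equalities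
  have hS2 : {p ∈ typeIIIndices m | 0 < Real.cos (2 * tII₁ m p.1 p.2) ∧ p.2 = 2} = ↑F2 := by
    ext p
    rw [Finset.mem_coe, ← mem2 p]
    simp only [Set.mem_setOf_eq]
  have hS13 : {p ∈ typeIIIndices m |
      0 < Real.cos (2 * tII₁ m p.1 p.2) ∧ (p.2 = 1 ∨ p.2 = 3)} = ↑F13 := by
    ext p
    rw [Finset.mem_coe, ← mem13 p]
    simp only [Set.mem_setOf_eq]
  have hS : {p ∈ typeIIIndices m | 0 < Real.cos (2 * tII₁ m p.1 p.2)} = ↑(F2 ∪ F13) := by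
    ext p
    rw [Finset.mem_coe, ← memall p]
    simp only [Set.mem_setOf_eq]
  -- cardinalities
  have hinj2 : Function.Injective (fun k : ℤ => ((k, 2) : ℤ × ℤ)) := fun a b h => by
    simpa using h
  have hinj1 : Function.Injective (fun k : ℤ => ((k, 1) : ℤ × ℤ)) := fun a b h => by
    simpa using h
  have hinj3 : Function.Injective (fun k : ℤ => ((k, 3) : ℤ × ℤ)) := fun a b h => by
    simpa using h
  have hd2 : Disjoint (Finset.Icc 1 q) (Finset.Icc (2 * m + 1 - q) (2 * m)) := by
    rw [Finset.disjoint_left]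
    intro a ha hb
    simp only [Finset.mem_Icc] at ha hb
    omega
  have hcardF2 : (F2.card : ℤ) = 2 * q := by
    rw [hF2, Finset.card_image_of_injective _ hinj2, Finset.card_union_of_disjoint hd2,
      Int.card_Icc, Int.card_Icc]
    push_cast
    omega
  have hd13 : Disjoint ((Finset.Icc (q + 1) m).image (fun k => ((k, 1) : ℤ × ℤ)))
      ((Finset.Icc (q + 1) m).image (fun k => ((k, 3) : ℤ × ℤ))) := by
    rw [Finset.disjoint_left]
    rintro p hp1 hp3
    simp only [Finset.mem_image] at hp1 hp3
    obtain ⟨a, _, rfl⟩ := hp1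
    obtain ⟨b, _, hb⟩ := hp3
    exact absurd (congrArg Prod.snd hb) (by simp)
  have hcardF13 : (F13.card : ℤ) = 2 * (m - q) := by
    rw [hF13, Finset.card_union_of_disjoint hd13, Finset.card_image_of_injective _ hinj1,
      Finset.card_image_of_injective _ hinj3, Int.card_Icc]
    push_cast
    omega
  have hdF : Disjoint F2 F13 := by
    rw [Finset.disjoint_left]
    intro p hp2 hp13
    have h2 : p.2 = 2 := by
      rw [hF2] at hp2
      simp only [Finset.mem_image] at hp2
      obtain ⟨a, _, rfl⟩ := hp2
      rfl
    rw [hF13] at hp13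
    simp only [Finset.mem_union, Finset.mem_image] at hp13
    rcases hp13 with ⟨a, _, ha⟩ | ⟨a, _, ha⟩ <;>
      · rw [← ha] at h2; exact absurd h2 (by simp)
  -- floor and ceil values
  have hfloor : ⌊(m : ℚ) / 2⌋ = q := by
    rw [Int.floor_eq_iff]
    constructor
    · rw [le_div_iff₀ (by norm_num : (0:ℚ) < 2)]
      exact_mod_cast (by omega : q * 2 ≤ m)
    · rw [div_lt_iff₀ (by norm_num : (0:ℚ) < 2)]
      push_cast
      exact_mod_cast (by omega : m < (q + 1) * 2)
  have hceil : ⌈(m : ℚ) / 2⌉ = m - q := by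
    rw [Int.ceil_eq_iff]
    constructor
    · rw [lt_div_iff₀ (by norm_num : (0:ℚ) < 2)]
      push_cast
      exact_mod_cast (by omega : (m - q - 1) * 2 < m)
    · rw [div_le_iff₀ (by norm_num : (0:ℚ) < 2)]
      push_cast
      exact_mod_cast (by omega : m ≤ (m - q) * 2)
  refine ⟨parta, partb, ⟨?_, ?_⟩, ?_, ?_⟩
  · rw [hS]; exact (F2 ∪ F13).finite_toSet
  · rw [hS, Set.ncard_coe_finset, Finset.card_union_of_disjoint hdF]
    push_cast
    omega
  · rw [hS2, Set.ncard_coe_finset, hfloor]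
    omega
  · rw [hS13, Set.ncard_coe_finset, hceil]
    omega
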